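/- Let $K\ge 1$, $\delta>0$, and let $z:[0,\infty)\to[0,\infty)$ be a function such that $z(0)=|x|$ for some $x$ with $|x|>0$, and such that the 'restart' decay estimate holds: for all $s,t\ge 0$, $z(s+t) \le \frac{K^2 z(s)^2}{K z(s)+\delta t}$. Then $z(t)=0$ for all $t \ge 4K^2|x|/\delta$. -/

import Mathlib

/-- If a nonnegative function `z` with `z 0 = x0 > 0` satisfies the restart decay
estimate `z (s+t) ≤ K² z(s)² / (K z(s) + δ t)`, then `z` vanishes from time
`4 K² x0 / δ` onward. -/
theorem stmt_2 (K δ x0 : ℝ) (hK : 1 ≤ K) (hδ : 0 < δ) (hx0 : 0 < x0)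
    (z : ℝ → ℝ) (hznn : ∀ t, 0 ≤ t → 0 ≤ z t) (hz0 : z 0 = x0)
    (hdecay : ∀ s t, 0 ≤ s → 0 ≤ t →
      z (s + t) ≤ K ^ 2 * (z s) ^ 2 / (K * z s + δ * t)) :
    ∀ t, 4 * K ^ 2 * x0 / δ ≤ t → z t = 0 := by
  intro t ht
  have hK0 : (0:ℝ) < K := lt_of_lt_of_le one_pos hK
  set c : ℝ := 4 * K ^ 2 * x0 / δ with hc
  have hcpos : 0 < c := by positivity
  have hstep : ∀ s a u, 0 ≤ s → z s ≤ a → 0 < u →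
      z (s + u) ≤ K ^ 2 * a ^ 2 / (δ * u) := by
    intro s a u hs hza hu
    have hzs : 0 ≤ z s := hznn s hs
    have ha : 0 ≤ a := le_trans hzs hza
    calc z (s + u) ≤ K ^ 2 * (z s) ^ 2 / (K * z s + δ * u) := hdecay s u hs hu.le
      _ ≤ K ^ 2 * a ^ 2 / (δ * u) := by
          apply div_le_div₀ (by positivity) (by gcongr) (by positivity)
          nlinarith [mul_nonneg hK0.le hzs]
  have hT : ∀ n : ℕ, z (c * (1 - (1/2)^n)) ≤ x0 / 2 ^ n := by
    intro n
    induction n with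
    | zero => simp [hz0]
    | succ n ih =>
      have hp1 : (1/2:ℝ)^n ≤ 1 := pow_le_one₀ (by norm_num) (by norm_num)
      have hs : 0 ≤ c * (1 - (1/2)^n) := by nlinarith
      have hu : 0 < c * (1/2)^(n+1) := by positivity
      have key := hstep _ _ _ hs ih hu
      have heq : c * (1 - (1/2)^n) + c * (1/2)^(n+1) = c * (1 - (1/2)^(n+1)) := by ring
      rw [heq] at key
      calc z (c * (1 - (1/2)^(n+1)))
          ≤ K^2 * (x0/2^n)^2 / (δ * (c * (1/2)^(n+1))) := key
        _ = x0 / 2^(n+1) := by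
            rw [hc]; simp only [one_div, inv_pow]; field_simp; ring
  have hbound : ∀ n : ℕ, z t ≤ x0 * (1/2) ^ n := by
    intro n
    have hp1 : (1/2:ℝ)^n ≤ 1 := pow_le_one₀ (by norm_num) (by norm_num)
    have hs : 0 ≤ c * (1 - (1/2)^n) := by nlinarith
    have hgap : c * (1/2)^n ≤ t - c * (1 - (1/2)^n) := by nlinarith
    have hu : 0 < t - c * (1 - (1/2)^n) := lt_of_lt_of_le (by positivity) hgap
    have key := hstep _ _ _ hs (hT n) hu
    rw [show c * (1 - (1/2)^n) + (t - c * (1 - (1/2)^n)) = t by ring] at key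
    calc z t ≤ K^2 * (x0/2^n)^2 / (δ * (t - c * (1 - (1/2)^n))) := key
      _ ≤ K^2 * (x0/2^n)^2 / (δ * (c * (1/2)^n)) := by gcongr
      _ = x0 * (1/2)^n / 4 := by rw [hc]; simp only [one_div, inv_pow]; field_simp
      _ ≤ x0 * (1/2)^n := by nlinarith [pow_pos (by norm_num : (0:ℝ) < 1/2) n]
  have hlim : Filter.Tendsto (fun n : ℕ => x0 * (1/2:ℝ)^n) Filter.atTop (nhds 0) := by
    simpa using (tendsto_pow_atTop_nhds_zero_of_lt_one (by norm_num : (0:ℝ) ≤ 1/2)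
      (by norm_num)).const_mul x0
  have hle0 : z t ≤ 0 := ge_of_tendsto' hlim hbound
  have hge0 : 0 ≤ z t := hznn t (le_trans hcpos.le ht)
  linarith
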